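/- arXiv:0908.4407 — 4 statements merged into one kernel-verified Lean document; each statement's English description precedes it below -/
import Mathlib

section
/- Let H be an impartial game such that every option of H has the empty game 0 among its options, and suppose that H is a misère win for the player to move. Then H is misère-indistinguishable from the empty game 0: for every impartial game T, the games H + T and T are both misère wins or both misère losses. -/
/-- An impartial game: a position is given by the list of its options
(the positions reachable in one move); both players have the same moves. -/
inductive Game : Type
  | node : List Game → Game

namespace Game

/-- The options of a position. -/
def options : Game → List Game
  | node l => l

/-- Disjunctive sum of two games: a move is made in exactly one component. -/
def add : Game → Game → Game
  | node l, node r =>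
      node ((l.attach.map fun x => add x.1 (node r)) ++
            (r.attach.map fun y => add (node l) y.1))
termination_by g h => sizeOf g + sizeOf h
decreasing_by
  · have := List.sizeOf_lt_of_mem x.2; simp_wf; (try simp only [Game.node.sizeOf_spec] at *); omega
  · have := List.sizeOf_lt_of_mem y.2; simp_wf; (try simp only [Game.node.sizeOf_spec] at *); omega

/-- Misère win (for the player to move): the game has no options,
or some option is a misère loss. -/
def MisereWin : Game → Prop
  | node l => l = [] ∨ ∃ x : {a // a ∈ l}, ¬ MisereWin x.1
decreasing_by
  simp_wf; have := List.sizeOf_lt_of_mem x.2; omega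

/-- Misère indistinguishability: adding any game `T` yields the same misère outcome. -/
def Indist (G H : Game) : Prop :=
  ∀ T : Game, MisereWin (add G T) ↔ MisereWin (add H T)

/-- The Nim-heap of size `n`, whose options are `nim 0, …, nim (n-1)`. -/
def nim : ℕ → Game
  | 0 => node []
  | n + 1 => node ((nim n).options ++ [nim n])

/-- Normal-play win (for the player to move): some option is a normal-play loss.
A player unable to move loses. -/
def NormalWin : Game → Prop
  | node l => ∃ x : {a // a ∈ l}, ¬ NormalWin x.1
decreasing_by
  simp_wf; have := List.sizeOf_lt_of_mem x.2; omega

/-- The Grundy value: the mex of the Grundy values of the options. -/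
noncomputable def grundy : Game → ℕ
  | node l => sInf {n : ℕ | ∀ x : {a // a ∈ l}, grundy x.1 ≠ n}
decreasing_by
  simp_wf; have := List.sizeOf_lt_of_mem x.2; omega

/-- The height of a game: the maximal number of moves in a play from it. -/
def height : Game → ℕ
  | node l => (l.attach.map fun x => height x.1 + 1).foldr max 0
decreasing_by
  simp_wf; have := List.sizeOf_lt_of_mem x.2; omega

/-- A canonical tree: duplicate options are removed, hereditarily. -/
def Canonical : Game → Prop
  | node l => l.Nodup ∧ ∀ x : {a // a ∈ l}, Canonical x.1
decreasing_by
  simp_wf; have := List.sizeOf_lt_of_mem x.2; omega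

/-- Extensional (set-theoretic) equality of game trees. -/
def ExtEq : Game → Game → Prop
  | node l, node r =>
      (∀ x : {a // a ∈ l}, ∃ y : {b // b ∈ r}, ExtEq x.1 y.1) ∧
      (∀ y : {b // b ∈ r}, ∃ x : {a // a ∈ l}, ExtEq x.1 y.1)
termination_by g _ => sizeOf g
decreasing_by
  · have := List.sizeOf_lt_of_mem x.2; simp_wf; (try simp only [Game.node.sizeOf_spec] at *); omega
  · have := List.sizeOf_lt_of_mem x.2; simp_wf; (try simp only [Game.node.sizeOf_spec] at *); omega

/-- The disjunctive sum of `n` copies of a game. -/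
def copies : ℕ → Game → Game
  | 0, _ => node []
  | n + 1, g => add g (copies n g)

/-- `G` is a reducer of `H` if `H` is obtained from `G` by adding reversible
moves `R₁, R₂, …`: the options of `H` are those of `G` together with the `Rⱼ`,
each `Rⱼ` having `G` among its options; when `G` is empty one additionally
requires `H` to be a misère win. -/
def Reducer (G H : Game) : Prop :=
  ∃ Rs : List Game,
    (∀ x, x ∈ H.options ↔ x ∈ G.options ∨ x ∈ Rs) ∧
    (∀ R ∈ Rs, G ∈ R.options) ∧
    (G.options = [] → MisereWin H)

/-- A canonical tree is reduced if its only reducer is itself (as a set of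
options) and all of its options are reduced. -/
def Reduced : Game → Prop
  | node l =>
      (∀ G, Reducer G (node l) → ∀ x, x ∈ G.options ↔ x ∈ l) ∧
      ∀ x : {a // a ∈ l}, Reduced x.1
decreasing_by
  simp_wf; have := List.sizeOf_lt_of_mem x.2; omega

end Game


namespace Game

theorem strongInd {P : Game → Prop} (h : ∀ l, (∀ x ∈ l, P x) → P (node l)) :
    ∀ g, P g
  | node l => h l (fun x hx => strongInd h x)
decreasing_by
  have := List.sizeOf_lt_of_mem hx; simp_wf; omega

theorem misereWin_iff (G : Game) :
    MisereWin G ↔ G.options = [] ∨ ∃ x ∈ G.options, ¬ MisereWin x := by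
  cases G with
  | node l => rw [MisereWin]; simp [options]

theorem mem_options_add {G T g : Game} :
    g ∈ (add G T).options ↔
      (∃ x ∈ G.options, g = add x T) ∨ (∃ t ∈ T.options, g = add G t) := by
  cases G with
  | node l =>
    cases T with
    | node r =>
      rw [add]
      simp [options, List.mem_append, List.mem_map, eq_comm]

theorem options_add_eq_nil {G T : Game} :
    (add G T).options = [] ↔ G.options = [] ∧ T.options = [] := by
  cases G with
  | node l =>
    cases T with
    | node r =>
      rw [add]
      simp [options]

theorem add_empty (G : Game) : MisereWin (add G (node [])) ↔ MisereWin G := by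
  induction G using strongInd with
  | h l ih =>
    rw [misereWin_iff, misereWin_iff (node l)]
    constructor
    · rintro (h | ⟨g, hg, hng⟩)
      · exact Or.inl (options_add_eq_nil.mp h).1
      · rcases mem_options_add.mp hg with ⟨x, hx, rfl⟩ | ⟨t, ht, rfl⟩
        · exact Or.inr ⟨x, hx, fun hw => hng ((ih x hx).mpr hw)⟩
        · simp [options] at ht
    · rintro (h | ⟨x, hx, hnx⟩)
      · exact Or.inl (options_add_eq_nil.mpr ⟨h, rfl⟩)
      · refine Or.inr ⟨add x (node []), mem_options_add.mpr (Or.inl ⟨x, hx, rfl⟩), ?_⟩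
        exact fun hw => hnx ((ih x hx).mp hw)

theorem empty_add (T : Game) : MisereWin (add (node []) T) ↔ MisereWin T := by
  induction T using strongInd with
  | h r ih =>
    rw [misereWin_iff, misereWin_iff (node r)]
    constructor
    · rintro (h | ⟨g, hg, hng⟩)
      · exact Or.inl (options_add_eq_nil.mp h).2
      · rcases mem_options_add.mp hg with ⟨x, hx, rfl⟩ | ⟨t, ht, rfl⟩
        · simp [options] at hx
        · exact Or.inr ⟨t, ht, fun hw => hng ((ih t ht).mpr hw)⟩
    · rintro (h | ⟨t, ht, hnt⟩)
      · exact Or.inl (options_add_eq_nil.mpr ⟨rfl, h⟩)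
      · refine Or.inr ⟨add (node []) t, mem_options_add.mpr (Or.inr ⟨t, ht, rfl⟩), ?_⟩
        exact fun hw => hnt ((ih t ht).mp hw)

end Game

open Game in
/-- If every option of `H` has the empty game `0` among its
options and `H` is a misère win, then `H` is misère-indistinguishable from
the empty game: for every `T`, `H + T` and `T` have the same misère outcome. -/
theorem stmt1 (H : Game)
    (hrev : ∀ x ∈ H.options, Game.node [] ∈ x.options)
    (hwin : MisereWin H) :
    ∀ T : Game, (MisereWin (add H T) ↔ MisereWin T) := by
  intro T
  induction T using strongInd with
  | h r ih =>
    constructor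
    · intro hw
      rcases (misereWin_iff _).mp hw with h | ⟨g, hg, hng⟩
      · rw [misereWin_iff]
        exact Or.inl (options_add_eq_nil.mp h).2
      · rcases mem_options_add.mp hg with ⟨x, hx, rfl⟩ | ⟨t, ht, rfl⟩
        · -- x + T is a loss; 0 + T is an option of it, hence a win; so T is a win
          have h0 : add (node []) (node r) ∈ (add x (node r)).options :=
            mem_options_add.mpr (Or.inl ⟨node [], hrev x hx, rfl⟩)
          have hx0 : MisereWin (add (node []) (node r)) := by
            by_contra hc
            exact hng ((misereWin_iff _).mpr (Or.inr ⟨_, h0, hc⟩))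
          exact (empty_add _).mp hx0
        · rw [misereWin_iff]
          exact Or.inr ⟨t, ht, fun hwt => hng ((ih t ht).mpr hwt)⟩
    · intro hw
      rcases (misereWin_iff _).mp hw with h | ⟨t, ht, hnt⟩
      · subst h
        rcases (misereWin_iff H).mp hwin with hH | ⟨x, hx, hnx⟩
        · exact (misereWin_iff _).mpr (Or.inl (options_add_eq_nil.mpr ⟨hH, rfl⟩))
        · refine (misereWin_iff _).mpr (Or.inr ⟨add x (node []),
            mem_options_add.mpr (Or.inl ⟨x, hx, rfl⟩), ?_⟩)
          exact fun hwx => hnx ((add_empty x).mp hwx)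
      · refine (misereWin_iff _).mpr (Or.inr ⟨add H t,
          mem_options_add.mpr (Or.inr ⟨t, ht, rfl⟩), ?_⟩)
        exact fun hwt => hnt ((ih t ht).mp hwt)
end

section
/- Let H be a canonical tree obtained from a nonempty canonical tree G by adding reversible moves R₁, R₂, … (so the options of H are the options of G together with the Rⱼ, and each Rⱼ has G among its options). Then each Rⱼ has height at least height(G) + 1, and consequently the options of G are exactly those options of H whose height is at most height(G); hence every reducer of H is of the form {options of H of height less than some fixed value}. -/
namespace Game

lemma le_foldr_max {a : ℕ} {L : List ℕ} (h : a ∈ L) : a ≤ L.foldr max 0 := by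
  induction L with
  | nil => cases h
  | cons b t ih =>
    rcases List.mem_cons.mp h with rfl | h
    · exact le_max_left _ _
    · exact le_trans (ih h) (le_max_right _ _)

lemma height_lt_of_mem {x G : Game} (h : x ∈ G.options) : height x + 1 ≤ height G := by
  obtain ⟨l⟩ := G
  rw [height]
  simp only [options] at h
  exact le_foldr_max (List.mem_map.mpr ⟨⟨x, h⟩, List.mem_attach _ _, rfl⟩)

end Game

open Game in
/-- If the canonical tree `H` is obtained from the nonempty
canonical tree `G` by adding reversible moves `R₁, R₂, …`, then each `Rⱼ` has
height at least `height G + 1`; consequently the options of `G` are exactly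
the options of `H` of height at most `height G`, and every reducer of `H` is
of the form {options of `H` of height less than some fixed value}. -/
theorem stmt7 (G H : Game) (Rs : List Game)
    (hG : Canonical G) (hH : Canonical H)
    (hne : G.options ≠ [])
    (hopts : ∀ x : Game, x ∈ H.options ↔ x ∈ G.options ∨ x ∈ Rs)
    (hrev : ∀ R ∈ Rs, G ∈ R.options) :
    (∀ R ∈ Rs, height G + 1 ≤ height R) ∧
    (∀ x : Game, x ∈ G.options ↔ (x ∈ H.options ∧ height x ≤ height G)) ∧
    (∀ G' : Game, Reducer G' H →
      ∃ b : ℕ, ∀ x : Game, x ∈ G'.options ↔ (x ∈ H.options ∧ height x < b)) := by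
  have hR : ∀ R ∈ Rs, height G + 1 ≤ height R := fun R hRmem =>
    height_lt_of_mem (hrev R hRmem)
  refine ⟨hR, ?_, ?_⟩
  · intro x
    constructor
    · intro hx
      refine ⟨(hopts x).mpr (Or.inl hx), ?_⟩
      have := height_lt_of_mem hx; omega
    · rintro ⟨hxH, hle⟩
      rcases (hopts x).mp hxH with h | h
      · exact h
      · have := hR x h; omega
  · rintro G' ⟨Rs', hopts', hrev', hemp'⟩
    refine ⟨height G' + 1, fun x => ?_⟩
    constructor
    · intro hx
      refine ⟨(hopts' x).mpr (Or.inl hx), ?_⟩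
      have := height_lt_of_mem hx; omega
    · rintro ⟨hxH, hlt⟩
      rcases (hopts' x).mp hxH with h | h
      · exact h
      · have := height_lt_of_mem (hrev' x h); omega
end

section
/- Any two reducers of the same canonical tree H are comparable for inclusion: if G₁ and G₂ are both reducers of H, then G₁ ⊆ G₂ or G₂ ⊆ G₁ (as sets of options); moreover, if G₁ is strictly included in G₂, then G₁ is itself a reducer of G₂. -/
open Game in
lemma le_foldr_max' (a : Nat) (L : List Nat) (h : a ∈ L) : a ≤ L.foldr max 0 := by
  induction L with
  | nil => simp at h
  | cons b t ih =>
    rcases List.mem_cons.mp h with rfl | h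
    · exact le_max_left _ _
    · exact le_trans (ih h) (le_max_right _ _)

open Game in
lemma height_lt' {x G : Game} (h : x ∈ G.options) : height x < height G := by
  cases G with
  | node l =>
    rw [height]
    have hm : height x + 1 ∈ l.attach.map fun y => height y.1 + 1 :=
      List.mem_map.mpr ⟨⟨x, h⟩, List.mem_attach _ _, rfl⟩
    have := le_foldr_max' _ _ hm
    omega

open Game in
/-- Any two reducers of the same canonical tree `H` are
comparable for inclusion (as sets of options); moreover if one is strictly
included in the other, then the smaller is a reducer of the bigger. -/
theorem stmt8 (H G₁ G₂ : Game) (hH : Canonical H)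
    (hG₁ : Canonical G₁) (hG₂ : Canonical G₂)
    (h1 : Reducer G₁ H) (h2 : Reducer G₂ H) :
    ((∀ x ∈ G₁.options, x ∈ G₂.options) ∨ (∀ x ∈ G₂.options, x ∈ G₁.options)) ∧
    (((∀ x ∈ G₁.options, x ∈ G₂.options) ∧ ¬ (∀ x ∈ G₂.options, x ∈ G₁.options)) →
      Reducer G₁ G₂) := by
  obtain ⟨Rs₁, hm1, hR1, hw1⟩ := h1
  obtain ⟨Rs₂, hm2, hR2, hw2⟩ := h2
  constructor
  · by_contra hc
    push_neg at hc
    obtain ⟨⟨x, hx1, hx2⟩, y, hy2, hy1⟩ := hc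
    have hxH : x ∈ H.options := (hm1 x).mpr (Or.inl hx1)
    have hxR : x ∈ Rs₂ := ((hm2 x).mp hxH).resolve_left hx2
    have h1x : G₂ ∈ x.options := hR2 x hxR
    have hyH : y ∈ H.options := (hm2 y).mpr (Or.inl hy2)
    have hyR : y ∈ Rs₁ := ((hm1 y).mp hyH).resolve_left hy1
    have h2y : G₁ ∈ y.options := hR1 y hyR
    have := height_lt' hx1
    have := height_lt' h1x
    have := height_lt' hy2
    have := height_lt' h2y
    omega
  · rintro ⟨hsub, hns⟩
    classical
    refine ⟨G₂.options.filter (fun z => decide (z ∉ G₁.options)), ?_, ?_, ?_⟩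
    · intro x
      constructor
      · intro hx
        by_cases hx1 : x ∈ G₁.options
        · exact Or.inl hx1
        · exact Or.inr (List.mem_filter.mpr ⟨hx, by simpa using hx1⟩)
      · rintro (hx | hx)
        · exact hsub x hx
        · exact (List.mem_filter.mp hx).1
    · intro R hR
      obtain ⟨hR2', hRn⟩ := List.mem_filter.mp hR
      have hRn' : R ∉ G₁.options := by simpa using hRn
      have hRH : R ∈ H.options := (hm2 R).mpr (Or.inl hR2')
      have hRR : R ∈ Rs₁ := ((hm1 R).mp hRH).resolve_left hRn'
      exact hR1 R hRR
    · intro hG1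
      have hwH : MisereWin H := hw1 hG1
      push_neg at hns
      obtain ⟨y, hy2, hy1⟩ := hns
      cases H with
      | node lH =>
        rw [MisereWin] at hwH
        rcases hwH with hnil | ⟨⟨W, hW⟩, hWloss⟩
        · exact absurd ((hm2 y).mpr (Or.inl hy2)) (by simp [options, hnil])
        · rcases (hm2 W).mp hW with hWin | hWR
          · cases G₂ with
            | node l2 =>
              rw [MisereWin]
              exact Or.inr ⟨⟨W, hWin⟩, hWloss⟩
          · have hG2W : G₂ ∈ W.options := hR2 W hWR
            cases W with
            | node lw =>
              rw [MisereWin] at hWloss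
              push_neg at hWloss
              exact hWloss.2 ⟨G₂, hG2W⟩
end

section
/- The impartial game {*3; {*2}} — whose two options are nim 3 and the game {*2} with unique option nim 2 — is misère-indistinguishable from the disjunctive sum nim 1 + {*2}. Consequently, nim 3 + {*3; {*2}} is misère-indistinguishable from nim 2 + {*2}. -/
namespace Game

theorem add_def (l r : List Game) :
    add (node l) (node r) =
      node ((l.map fun x => add x (node r)) ++ (r.map fun y => add (node l) y)) := by
  rw [add]
  simp [List.attach_map_val]

theorem win_node (l : List Game) :
    MisereWin (node l) ↔ l = [] ∨ ∃ x ∈ l, ¬ MisereWin x := by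
  rw [MisereWin]
  simp

end Game
namespace Game

theorem win_add (l r : List Game) :
    MisereWin (add (node l) (node r)) ↔
      (l = [] ∧ r = []) ∨ (∃ x ∈ l, ¬ MisereWin (add x (node r))) ∨
        (∃ y ∈ r, ¬ MisereWin (add (node l) y)) := by
  rw [add_def, win_node]
  simp only [List.mem_append, List.mem_map, List.append_eq_nil_iff, List.map_eq_nil_iff]
  constructor
  · rintro (h | ⟨x, (⟨a, ha, rfl⟩ | ⟨a, ha, rfl⟩), hx⟩)
    · exact Or.inl h
    · exact Or.inr (Or.inl ⟨a, ha, hx⟩)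
    · exact Or.inr (Or.inr ⟨a, ha, hx⟩)
  · rintro (⟨h1, h2⟩ | ⟨x, hx, h⟩ | ⟨y, hy, h⟩)
    · exact Or.inl ⟨h1, h2⟩
    · exact Or.inr ⟨_, Or.inl ⟨x, hx, rfl⟩, h⟩
    · exact Or.inr ⟨_, Or.inr ⟨y, hy, rfl⟩, h⟩

theorem add_assoc' : ∀ a b c : Game, add (add a b) c = add a (add b c)
  | node l, node r, node s => by
    rw [add_def l r, add_def r s, add_def, add_def]
    simp only [List.map_append, List.map_map, List.append_assoc]
    refine congrArg node ?_
    congr 1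
    · exact List.map_congr_left fun x hx => by
        simp only [Function.comp]
        rw [← add_def, add_assoc' x (node r) (node s)]
    congr 1
    · exact List.map_congr_left fun y hy => by
        simp only [Function.comp]
        rw [add_assoc' (node l) y (node s)]
    · exact List.map_congr_left fun z hz => by
        simp only [Function.comp]
        rw [← add_def, add_assoc' (node l) (node r) z]
termination_by a b c => sizeOf a + sizeOf b + sizeOf c
decreasing_by
  all_goals simp_wf
  · have := List.sizeOf_lt_of_mem hx; simp only [Game.node.sizeOf_spec] at *; omega
  · have := List.sizeOf_lt_of_mem hy; simp only [Game.node.sizeOf_spec] at *; omega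
  · have := List.sizeOf_lt_of_mem hz; simp only [Game.node.sizeOf_spec] at *; omega

end Game
namespace Game

theorem win_comm : ∀ a b : Game, MisereWin (add a b) ↔ MisereWin (add b a)
  | node l, node r => by
    rw [win_add, win_add]
    constructor
    · rintro (⟨h1, h2⟩ | ⟨x, hx, h⟩ | ⟨y, hy, h⟩)
      · exact Or.inl ⟨h2, h1⟩
      · exact Or.inr (Or.inr ⟨x, hx, fun w => h ((win_comm x (node r)).mpr w)⟩)
      · exact Or.inr (Or.inl ⟨y, hy, fun w => h ((win_comm (node l) y).mpr w)⟩)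
    · rintro (⟨h1, h2⟩ | ⟨y, hy, h⟩ | ⟨x, hx, h⟩)
      · exact Or.inl ⟨h2, h1⟩
      · exact Or.inr (Or.inr ⟨y, hy, fun w => h ((win_comm (node l) y).mp w)⟩)
      · exact Or.inr (Or.inl ⟨x, hx, fun w => h ((win_comm x (node r)).mp w)⟩)
termination_by a b => sizeOf a + sizeOf b
decreasing_by
  all_goals simp_wf
  all_goals first
    | (have := List.sizeOf_lt_of_mem hx; simp only [Game.node.sizeOf_spec] at *; omega)
    | (have := List.sizeOf_lt_of_mem hy; simp only [Game.node.sizeOf_spec] at *; omega)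

theorem zero_add_win : ∀ g : Game, MisereWin (add (node []) g) ↔ MisereWin g
  | node s => by
    rw [win_add, win_node]
    simp only [List.not_mem_nil, false_and, exists_false, false_or, true_and,
      IsEmpty.exists_iff]
    constructor
    · rintro (h | ⟨t, ht, h⟩)
      · exact Or.inl h
      · exact Or.inr ⟨t, ht, fun w => h ((zero_add_win t).mpr w)⟩
    · rintro (h | ⟨t, ht, h⟩)
      · exact Or.inl h
      · exact Or.inr ⟨t, ht, fun w => h ((zero_add_win t).mp w)⟩
termination_by g => sizeOf g
decreasing_by
  all_goals (simp_wf; have := List.sizeOf_lt_of_mem ht; omega)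

theorem add_zero_win (a t : Game) :
    MisereWin (add a (add (node []) t)) ↔ MisereWin (add a t) := by
  rw [win_comm a, add_assoc', zero_add_win, win_comm t a]

end Game
namespace Game

theorem indist_refl (a : Game) : Indist a a := fun _ => Iff.rfl
theorem indist_symm {a b : Game} (h : Indist a b) : Indist b a := fun T => (h T).symm
theorem indist_trans {a b c : Game} (h1 : Indist a b) (h2 : Indist b c) : Indist a c :=
  fun T => (h1 T).trans (h2 T)

theorem indist_add_right {a b : Game} (h : Indist a b) (c : Game) :
    Indist (add a c) (add b c) := fun T => by
  rw [add_assoc', add_assoc']; exact h (add c T)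

theorem indist_add_left {a b : Game} (h : Indist a b) (c : Game) :
    Indist (add c a) (add c b) := fun T => by
  rw [add_assoc', add_assoc', win_comm c, win_comm c, add_assoc', add_assoc']
  exact h (add T c)

/-- zero (the empty game) is right identity up to Indist -/
theorem indist_add_nil (a : Game) : Indist (add a (node [])) a := fun T => by
  rw [add_assoc']
  exact add_zero_win a T

theorem indist_nil_add (a : Game) : Indist (add (node []) a) a := fun T => by
  rw [add_assoc']
  exact zero_add_win (add a T)

/-- congruence: matching options up to Indist gives Indist -/
theorem indist_node {l r : List Game}
    (h1 : ∀ x ∈ l, ∃ y ∈ r, Indist x y)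
    (h2 : ∀ y ∈ r, ∃ x ∈ l, Indist x y) :
    Indist (node l) (node r)
  | node s => by
    rw [win_add, win_add]
    constructor
    · rintro (⟨hl, hs⟩ | ⟨x, hx, h⟩ | ⟨t, ht, h⟩)
      · refine Or.inl ⟨?_, hs⟩
        cases r with
        | nil => rfl
        | cons y ys => obtain ⟨x, hx, -⟩ := h2 y (by simp); rw [hl] at hx; cases hx
      · obtain ⟨y, hy, hxy⟩ := h1 x hx
        exact Or.inr (Or.inl ⟨y, hy, fun w => h ((hxy (node s)).mpr w)⟩)
      · exact Or.inr (Or.inr ⟨t, ht, fun w => h ((indist_node h1 h2 t).mpr w)⟩)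
    · rintro (⟨hr, hs⟩ | ⟨y, hy, h⟩ | ⟨t, ht, h⟩)
      · refine Or.inl ⟨?_, hs⟩
        cases l with
        | nil => rfl
        | cons x xs => obtain ⟨y, hy, -⟩ := h1 x (by simp); rw [hr] at hy; cases hy
      · obtain ⟨x, hx, hxy⟩ := h2 y hy
        exact Or.inr (Or.inl ⟨x, hx, fun w => h ((hxy (node s)).mp w)⟩)
      · exact Or.inr (Or.inr ⟨t, ht, fun w => h ((indist_node h1 h2 t).mp w)⟩)
termination_by T => sizeOf T
decreasing_by
  all_goals (simp_wf; have := List.sizeOf_lt_of_mem ht; omega)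

end Game
namespace Game

theorem nim0 : nim 0 = node [] := by simp [nim]
theorem nim1 : nim 1 = node [nim 0] := by simp [nim, options]
theorem nim2 : nim 2 = node [nim 0, nim 1] := by
  show nim (1+1) = _
  rw [nim, nim1]; rfl
theorem nim3 : nim 3 = node [nim 0, nim 1, nim 2] := by
  show nim (2+1) = _
  rw [nim, nim2]; rfl

theorem not_win_node {m : List Game} (h : ¬ MisereWin (node m)) :
    ∀ x ∈ m, MisereWin x := by
  rw [win_node] at h
  push_neg at h
  exact h.2

theorem winL (x T : Game) :
    MisereWin (add (add (node []) x) T) ↔ MisereWin (add x T) := by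
  rw [add_assoc']; exact zero_add_win (add x T)

theorem winR (x T : Game) :
    MisereWin (add (add x (node [])) T) ↔ MisereWin (add x T) := by
  rw [add_assoc']; exact add_zero_win x T

end Game
namespace Game

theorem star_star' : ∀ T : Game,
    MisereWin (add (add (node [node []]) (node [node []])) T) ↔ MisereWin T
  | node s => by
    have e : add (node [node []]) (node [node []]) =
        node [add (node []) (node [node []]), add (node [node []]) (node [])] := by
      rw [add_def]; rfl
    rw [e, win_add, win_node]
    have hA1 := winL (node [node []]) (node s)
    have hA2 := winR (node [node []]) (node s)
    have IH : ∀ t ∈ s, (MisereWin (add (node [add (node []) (node [node []]),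
        add (node [node []]) (node [])]) t) ↔ MisereWin t) := fun t ht => by
      rw [← e]; exact star_star' t
    simp only [List.mem_cons, List.not_mem_nil, List.mem_singleton, or_false,
      exists_eq_or_imp, exists_eq_left, List.cons_ne_nil, false_and, false_or]
    rw [hA1, hA2, or_self]
    have eL : (∃ t ∈ s, ¬ MisereWin (add (node [add (node []) (node [node []]),
        add (node [node []]) (node [])]) t)) ↔ (∃ t ∈ s, ¬ MisereWin t) :=
      ⟨fun ⟨t,ht,h⟩ => ⟨t,ht,fun w => h ((IH t ht).mpr w)⟩,
       fun ⟨t,ht,h⟩ => ⟨t,ht,fun w => h ((IH t ht).mp w)⟩⟩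
    rw [eL]
    by_cases hex : ∃ t ∈ s, ¬ MisereWin t
    · constructor <;> intro _ <;> exact Or.inr hex
    · push_neg at hex
      have key : ¬ MisereWin (add (node [node []]) (node s)) ↔ s = [] := by
        constructor
        · intro hnA
          by_contra hs
          apply hnA
          rw [win_add]
          refine Or.inr (Or.inl ⟨node [], by simp, ?_⟩)
          rw [zero_add_win, win_node]
          rintro (h | ⟨t, ht, hw⟩)
          · exact hs h
          · exact hw (hex t ht)
        · rintro rfl
          rw [win_add]
          rintro (⟨h, -⟩ | ⟨x, hx, hw⟩ | ⟨t, ht, -⟩)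
          · cases h
          · simp only [List.mem_singleton] at hx
            subst hx
            rw [zero_add_win, win_node] at hw
            exact hw (Or.inl rfl)
          · cases ht
      rw [key]
termination_by T => sizeOf T
decreasing_by
  simp_wf; have := List.sizeOf_lt_of_mem ht; omega

theorem star_star : Indist (add (nim 1) (nim 1)) (nim 0) := fun T => by
  rw [nim1, nim0, star_star', zero_add_win]

end Game
namespace Game

theorem e21 : add (nim 2) (nim 1) =
    node [add (nim 0) (nim 1), add (nim 1) (nim 1), add (nim 2) (nim 0)] := by
  rw [nim2, nim1, nim0, add_def]; rfl

theorem e31 : add (nim 3) (nim 1) =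
    node [add (nim 0) (nim 1), add (nim 1) (nim 1), add (nim 2) (nim 1),
      add (nim 3) (nim 0)] := by
  rw [nim3, nim2, nim1, nim0, add_def]; rfl

theorem three_one' : ∀ T : Game,
    MisereWin (add (add (nim 3) (nim 1)) T) ↔ MisereWin (add (nim 2) T)
  | node s => by
    have hR : MisereWin (add (nim 2) (node s)) ↔
        (¬ MisereWin (add (nim 0) (node s)) ∨ ¬ MisereWin (add (nim 1) (node s)) ∨
          ∃ t ∈ s, ¬ MisereWin (add (nim 2) t)) := by
      rw [nim2, win_add]
      simp only [List.mem_cons, List.not_mem_nil, List.mem_singleton, or_false,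
        exists_eq_or_imp, exists_eq_left, List.cons_ne_nil, false_and, false_or, ← nim2]
      rw [or_assoc]
    have fact1 : ¬ MisereWin (add (add (nim 2) (nim 1)) (node s)) →
        MisereWin (add (nim 2) (node s)) := by
      intro h
      rw [e21, win_add] at h
      push_neg at h
      have w := h.2.1 (add (nim 2) (nim 0)) (.tail _ (.tail _ (.head _)))
      rwa [nim0, winR] at w
    have fact2 : ¬ MisereWin (add (nim 3) (node s)) →
        MisereWin (add (nim 2) (node s)) := by
      intro h
      rw [nim3, win_add] at h
      push_neg at h
      exact h.2.1 (nim 2) (.tail _ (.tail _ (.head _)))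
    have IH : ∀ t ∈ s, (MisereWin (add (add (nim 3) (nim 1)) t) ↔
        MisereWin (add (nim 2) t)) := fun t ht => three_one' t
    rw [e31, win_add]
    simp only [List.mem_cons, List.not_mem_nil, List.mem_singleton, or_false,
      exists_eq_or_imp, exists_eq_left, List.cons_ne_nil, false_and, false_or]
    have h1 : MisereWin (add (add (nim 0) (nim 1)) (node s)) ↔
        MisereWin (add (nim 1) (node s)) := by rw [nim0]; exact winL _ _
    have h2 := star_star (node s)
    have h4 : MisereWin (add (add (nim 3) (nim 0)) (node s)) ↔
        MisereWin (add (nim 3) (node s)) := by rw [nim0]; exact winR _ _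
    have eL : (∃ t ∈ s, ¬ MisereWin (add (node [add (nim 0) (nim 1), add (nim 1) (nim 1),
        add (nim 2) (nim 1), add (nim 3) (nim 0)]) t)) ↔
        (∃ t ∈ s, ¬ MisereWin (add (nim 2) t)) := by
      rw [← e31]
      exact ⟨fun ⟨t,ht,h⟩ => ⟨t,ht,fun w => h ((IH t ht).mpr w)⟩,
        fun ⟨t,ht,h⟩ => ⟨t,ht,fun w => h ((IH t ht).mp w)⟩⟩
    rw [h1, h2, h4, eL, hR]
    rw [← hR]
    constructor
    · rintro ((h | h | h | h) | hE)
      · exact hR.mpr (Or.inr (Or.inl h))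
      · exact hR.mpr (Or.inl h)
      · exact fact1 h
      · exact fact2 h
      · exact hR.mpr (Or.inr (Or.inr hE))
    · intro h
      rcases hR.mp h with h0 | h1' | hE
      · exact Or.inl (Or.inr (Or.inl h0))
      · exact Or.inl (Or.inl h1')
      · exact Or.inr hE
termination_by T => sizeOf T
decreasing_by
  simp_wf; have := List.sizeOf_lt_of_mem ht; omega

theorem three_one : Indist (add (nim 3) (nim 1)) (nim 2) := three_one'

end Game
namespace Game

theorem indist_zero_add (x : Game) : Indist (add (nim 0) x) x := fun T => by
  rw [nim0]; exact winL x T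

theorem indist_add_zero' (x : Game) : Indist (add x (nim 0)) x := fun T => by
  rw [nim0]; exact winR x T

theorem e12 : add (nim 1) (nim 2) =
    node [add (nim 0) (nim 2), add (nim 1) (nim 0), add (nim 1) (nim 1)] := by
  rw [nim2, nim1, nim0, add_def]; rfl

theorem nim3_indist : Indist (nim 3) (add (nim 1) (nim 2)) := by
  rw [nim3, e12]
  apply indist_node
  · intro x hx
    simp only [List.mem_cons, List.not_mem_nil, or_false] at hx
    rcases hx with rfl | rfl | rfl
    · exact ⟨add (nim 1) (nim 1), .tail _ (.tail _ (.head _)), indist_symm star_star⟩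
    · exact ⟨add (nim 1) (nim 0), .tail _ (.head _), indist_symm (indist_add_zero' _)⟩
    · exact ⟨add (nim 0) (nim 2), .head _, indist_symm (indist_zero_add _)⟩
  · intro y hy
    simp only [List.mem_cons, List.not_mem_nil, or_false] at hy
    rcases hy with rfl | rfl | rfl
    · exact ⟨nim 2, .tail _ (.tail _ (.head _)), indist_symm (indist_zero_add _)⟩
    · exact ⟨nim 1, .tail _ (.head _), indist_symm (indist_add_zero' _)⟩
    · exact ⟨nim 0, .head _, indist_symm star_star⟩

theorem eH : add (nim 1) (node [nim 2]) =
    node [add (nim 0) (node [nim 2]), add (nim 1) (nim 2)] := by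
  rw [nim1, nim0, add_def]; rfl

theorem part1 : Indist (node [nim 3, node [nim 2]]) (add (nim 1) (node [nim 2])) := by
  rw [eH]
  apply indist_node
  · intro x hx
    simp only [List.mem_cons, List.not_mem_nil, or_false] at hx
    rcases hx with rfl | rfl
    · exact ⟨add (nim 1) (nim 2), .tail _ (.head _), nim3_indist⟩
    · exact ⟨add (nim 0) (node [nim 2]), .head _, indist_symm (indist_zero_add _)⟩
  · intro y hy
    simp only [List.mem_cons, List.not_mem_nil, or_false] at hy
    rcases hy with rfl | rfl
    · exact ⟨node [nim 2], .tail _ (.head _), indist_symm (indist_zero_add _)⟩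
    · exact ⟨nim 3, .head _, nim3_indist⟩

theorem part2 : Indist (add (nim 3) (node [nim 3, node [nim 2]]))
    (add (nim 2) (node [nim 2])) := by
  have s1' : Indist (add (nim 3) (node [nim 3, node [nim 2]]))
      (add (add (nim 3) (nim 1)) (node [nim 2])) := by
    rw [add_assoc']
    exact indist_add_left part1 (nim 3)
  exact indist_trans s1' (indist_add_right three_one (node [nim 2]))

end Game

open Game in
/-- The game `{*3; {*2}}` is misère-indistinguishable from
`nim 1 + {*2}`; consequently `nim 3 + {*3; {*2}}` is
misère-indistinguishable from `nim 2 + {*2}`. -/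
theorem stmt15 :
    Indist (Game.node [nim 3, Game.node [nim 2]]) (add (nim 1) (Game.node [nim 2])) ∧
    Indist (add (nim 3) (Game.node [nim 3, Game.node [nim 2]]))
           (add (nim 2) (Game.node [nim 2])) :=
  ⟨Game.part1, Game.part2⟩
end
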